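/- Let L be an abelian group equipped with a symmetric ℤ-valued bilinear form B such that B(x, x) is even for every x ∈ L. Suppose e₁, …, e_r ∈ L satisfy B(eᵢ, eⱼ) = −2 if i = j and B(eᵢ, eⱼ) = 0 if i ≠ j, and suppose there exists m ∈ L with e₁ + ⋯ + e_r = 2m. Then r is divisible by 4. -/

import Mathlib

/-- **Even overlattice parity.** If `L` is an abelian group with a symmetric, bi-additive,
`ℤ`-valued and even bilinear form `B`, and `e 1, …, e r` are pairwise orthogonal vectors of
square `-2` whose sum is divisible by `2` in `L`, then `4 ∣ r`. -/
theorem sum_of_orthogonal_minus_two_vectors_even_implies_four_dvd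
    {L : Type*} [AddCommGroup L] (B : L → L → ℤ)
    (hBsymm : ∀ x y, B x y = B y x)
    (hBaddl : ∀ x y z, B (x + y) z = B x z + B y z)
    (hBaddr : ∀ x y z, B x (y + z) = B x y + B x z)
    (hBeven : ∀ x, 2 ∣ B x x)
    (r : ℕ) (e : Fin r → L)
    (he : ∀ i j, B (e i) (e j) = if i = j then -2 else 0)
    (m : L) (hm : ∑ i, e i = 2 • m) :
    4 ∣ r := by
  have hsuml : ∀ (s : Finset (Fin r)) (y : L), B (∑ i ∈ s, e i) y = ∑ i ∈ s, B (e i) y := by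
    intro s y
    induction s using Finset.induction with
    | empty =>
        simp only [Finset.sum_empty]
        have := hBaddl 0 0 y
        simp at this; linarith [this]
    | insert a s h ih =>
        rw [Finset.sum_insert h, Finset.sum_insert h, hBaddl, ih]
  have hsumr : ∀ (x : L) (s : Finset (Fin r)), B x (∑ i ∈ s, e i) = ∑ i ∈ s, B x (e i) := by
    intro x s
    rw [hBsymm, hsuml]
    exact Finset.sum_congr rfl fun i _ => hBsymm _ _
  have key : B (∑ i, e i) (∑ i, e i) = -2 * r := by
    rw [hsuml]
    have : ∀ i ∈ Finset.univ, B (e i) (∑ j, e j) = -2 := by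
      intro i _
      rw [hsumr]
      simp [he]
    rw [Finset.sum_congr rfl this]
    simp; ring
  have h2 : B (2 • m) (2 • m) = 4 * B m m := by
    have : (2 : ℕ) • m = m + m := two_nsmul m
    rw [this, hBaddl, hBaddr]; ring
  rw [hm, h2] at key
  obtain ⟨k, hk⟩ := hBeven m
  have hr : (r : ℤ) = 4 * (-k) := by rw [hk] at key; linarith
  have : (4 : ℤ) ∣ (r : ℤ) := ⟨-k, hr⟩
  exact_mod_cast this
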